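/- Let τ be a topology on a finite set X with n elements, and let u_j denote the number of open sets in τ of cardinality j. Then the open set polynomial P(x) = Σ_{j=0}^{n} u_j x^j has only real roots if and only if τ is the discrete topology on X (in which case P(x) = (1+x)^n). -/

import Mathlib

open Polynomial

/-- A (combinatorial) topology on the finite set `Fin n`: a family of subsets containing
`∅` and the whole set, closed under unions and intersections. -/
def IsTopology {n : ℕ} (τ : Finset (Finset (Fin n))) : Prop :=
  ∅ ∈ τ ∧ Finset.univ ∈ τ ∧
    (∀ s ∈ τ, ∀ t ∈ τ, s ∪ t ∈ τ) ∧ (∀ s ∈ τ, ∀ t ∈ τ, s ∩ t ∈ τ)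

/-- `u_j`: the number of open sets of cardinality `j`. -/
def openCount {n : ℕ} (τ : Finset (Finset (Fin n))) (j : ℕ) : ℕ :=
  (τ.filter fun s => s.card = j).card

/-- The open set polynomial `P(x) = Σ_{j=0}^n u_j x^j`. -/
noncomputable def openPoly {n : ℕ} (τ : Finset (Finset (Fin n))) : Polynomial ℝ :=
  ∑ j ∈ Finset.range (n + 1), Polynomial.C (openCount τ j : ℝ) * Polynomial.X ^ j

/-- The open set polynomial of a finite topology has only real roots iff the topology is
the discrete one, in which case the polynomial is `(1+x)^n`. -/

lemma openPoly_coeff {n : ℕ} (τ : Finset (Finset (Fin n))) (k : ℕ) (hk : k ≤ n) :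
    (openPoly τ).coeff k = (openCount τ k : ℝ) := by
  simp [openPoly, coeff_X_pow, Finset.sum_ite_eq', Nat.lt_succ_iff, hk]

lemma openPoly_coeff_zero {n : ℕ} (τ : Finset (Finset (Fin n))) (k : ℕ) (hk : n < k) :
    (openPoly τ).coeff k = 0 := by
  simp only [openPoly, finset_sum_coeff, coeff_C_mul, coeff_X_pow]
  apply Finset.sum_eq_zero
  intro j hj
  simp only [Finset.mem_range] at hj
  rw [if_neg (by omega), mul_zero]

lemma openCount_zero {n : ℕ} (τ : Finset (Finset (Fin n))) (h : ∅ ∈ τ) :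
    openCount τ 0 = 1 := by
  unfold openCount
  rw [Finset.card_eq_one]
  refine ⟨∅, ?_⟩
  ext s
  simp only [Finset.mem_filter, Finset.card_eq_zero, Finset.mem_singleton]
  constructor
  · rintro ⟨_, rfl⟩; rfl
  · rintro rfl; exact ⟨h, rfl⟩

lemma openCount_top {n : ℕ} (τ : Finset (Finset (Fin n))) (h : Finset.univ ∈ τ) :
    openCount τ n = 1 := by
  unfold openCount
  rw [Finset.card_eq_one]
  refine ⟨Finset.univ, ?_⟩
  ext s
  simp only [Finset.mem_filter, Finset.mem_singleton]
  constructor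
  · rintro ⟨_, hs⟩; exact s.eq_univ_of_card (by simpa using hs)
  · rintro rfl; exact ⟨h, by simp⟩

lemma openPoly_natDegree {n : ℕ} (τ : Finset (Finset (Fin n))) (h : Finset.univ ∈ τ) :
    (openPoly τ).natDegree = n := by
  have h1 : (openPoly τ).coeff n = 1 := by
    rw [openPoly_coeff τ n le_rfl, openCount_top τ h]; norm_num
  have hle : (openPoly τ).natDegree ≤ n :=
    natDegree_le_iff_coeff_eq_zero.2 fun k hk => openPoly_coeff_zero τ k hk
  have hge : n ≤ (openPoly τ).natDegree := le_natDegree_of_ne_zero (by rw [h1]; norm_num)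
  omega

lemma openPoly_monic {n : ℕ} (τ : Finset (Finset (Fin n))) (h : Finset.univ ∈ τ) :
    (openPoly τ).Monic := by
  unfold Polynomial.Monic Polynomial.leadingCoeff
  rw [openPoly_natDegree τ h, openPoly_coeff τ n le_rfl, openCount_top τ h]
  norm_num

lemma filter_subset_powersetCard {n : ℕ} (τ : Finset (Finset (Fin n))) (j : ℕ) :
    τ.filter (fun s => s.card = j) ⊆ Finset.powersetCard j Finset.univ := by
  intro s hs
  simp only [Finset.mem_filter] at hs
  simp [Finset.mem_powersetCard, hs.2]

lemma openCount_le {n : ℕ} (τ : Finset (Finset (Fin n))) (j : ℕ) :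
    openCount τ j ≤ n.choose j := by
  have := Finset.card_le_card (filter_subset_powersetCard τ j)
  simpa [Finset.card_powersetCard, openCount] using this

lemma mem_of_openCount_eq {n : ℕ} (τ : Finset (Finset (Fin n))) (j : ℕ)
    (h : openCount τ j = n.choose j) (s : Finset (Fin n)) (hs : s.card = j) : s ∈ τ := by
  have heq : τ.filter (fun s => s.card = j) = Finset.powersetCard j Finset.univ := by
    apply Finset.eq_of_subset_of_card_le (filter_subset_powersetCard τ j)
    rw [Finset.card_powersetCard]
    simpa [openCount] using h.ge
  have : s ∈ Finset.powersetCard j Finset.univ := by simp [Finset.mem_powersetCard, hs]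
  rw [← heq] at this
  exact (Finset.mem_filter.1 this).1

lemma topology_eq_univ {n : ℕ} (τ : Finset (Finset (Fin (n + 1)))) (hτ : IsTopology τ)
    (h : ∀ s : Finset (Fin (n + 1)), s.card = n → s ∈ τ) : τ = Finset.univ := by
  obtain ⟨-, huniv, -, hinter⟩ := hτ
  apply Finset.eq_univ_of_forall
  suffices H : ∀ j : ℕ, ∀ s : Finset (Fin (n + 1)), n + 1 ≤ s.card + j → s ∈ τ by
    intro s; exact H (n + 1) s (by omega)
  intro j
  induction j with
  | zero =>
    intro s hs
    have hcard : s.card = n + 1 := by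
      have := Finset.card_le_univ s
      simp only [Finset.card_univ, Fintype.card_fin] at this
      omega
    have : s = Finset.univ := s.eq_univ_of_card (by simpa using hcard)
    rwa [this]
  | succ j ih =>
    intro s hs
    by_cases hu : s = Finset.univ
    · rwa [hu]
    · have : ∃ a, a ∉ s := by
        by_contra hc
        push_neg at hc
        exact hu (Finset.eq_univ_of_forall hc)
      obtain ⟨a, ha⟩ := this
      have h1 : insert a s ∈ τ := by
        apply ih
        rw [Finset.card_insert_of_notMem ha]
        omega
      have h2 : Finset.univ.erase a ∈ τ := by
        apply h
        rw [Finset.card_erase_of_mem (Finset.mem_univ a)]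
        simp
      have hseq : s = (insert a s) ∩ (Finset.univ.erase a) := by
        ext x
        simp only [Finset.mem_inter, Finset.mem_insert, Finset.mem_erase, Finset.mem_univ,
          and_true]
        constructor
        · intro hx; exact ⟨Or.inr hx, fun hxa => ha (hxa ▸ hx)⟩
        · rintro ⟨(rfl | hx), hne⟩
          · exact absurd rfl hne
          · exact hx
      rw [hseq]
      exact hinter _ h1 _ h2

lemma openCount_univ {n : ℕ} (j : ℕ) :
    openCount (Finset.univ : Finset (Finset (Fin n))) j = n.choose j := by
  unfold openCount
  rw [← Finset.powerset_univ, ← Finset.powersetCard_eq_filter, Finset.card_powersetCard]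
  simp

lemma log_aux (T : Multiset ℝ) (h : ∀ x ∈ T, 0 < x) :
    (Multiset.card T : ℝ) + Real.log T.prod ≤ T.sum := by
  induction T using Multiset.induction_on with
  | empty => simp
  | cons a T ih =>
    have ha : 0 < a := h a (Multiset.mem_cons_self a T)
    have hT : ∀ x ∈ T, 0 < x := fun x hx => h x (Multiset.mem_cons_of_mem hx)
    have hTprod : 0 < T.prod := Multiset.prod_pos hT
    rw [Multiset.prod_cons, Multiset.sum_cons, Multiset.card_cons,
      Real.log_mul ha.ne' hTprod.ne']
    have h1 : Real.log a ≤ a - 1 := Real.log_le_sub_one_of_pos ha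
    have h2 := ih hT
    push_cast
    linarith
lemma openPoly_univ {n : ℕ} :
    openPoly (Finset.univ : Finset (Finset (Fin n))) = (1 + X) ^ n := by
  ext k
  rw [coeff_one_add_X_pow]
  by_cases hk : k ≤ n
  · rw [openPoly_coeff _ k hk, openCount_univ]
  · rw [openPoly_coeff_zero _ k (by omega), Nat.choose_eq_zero_of_lt (by omega)]
    norm_num

lemma roots_one_add_X_pow_real {n : ℕ} (hn : 1 ≤ n) :
    ∀ z ∈ (((1 + X : ℝ[X]) ^ n).map (algebraMap ℝ ℂ)).roots, z.im = 0 := by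
  intro z hz
  have h1 : ((1 + X : ℝ[X]) ^ n).map (algebraMap ℝ ℂ) = (X - C (-1 : ℂ)) ^ n := by
    rw [Polynomial.map_pow, Polynomial.map_add, Polynomial.map_one, map_X]
    congr 1
    rw [map_neg, map_one]
    ring
  rw [h1, roots_pow, roots_X_sub_C] at hz
  have := (Multiset.mem_nsmul.1 hz).2
  simp only [Multiset.mem_singleton] at this
  rw [this]
  simp

lemma openPoly_eval_ge {n : ℕ} (τ : Finset (Finset (Fin n))) (h0 : ∅ ∈ τ) {x : ℝ}
    (hx : 0 ≤ x) : 1 ≤ (openPoly τ).eval x := by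
  have key : (1 : ℝ) = (openCount τ 0 : ℝ) * x ^ 0 := by
    rw [openCount_zero τ h0]; norm_num
  simp only [openPoly, eval_finset_sum, eval_mul, eval_C, eval_pow, eval_X]
  rw [key]
  exact Finset.single_le_sum (f := fun j => (openCount τ j : ℝ) * x ^ j)
    (fun j _ => by positivity) (Finset.mem_range.mpr (by omega))

lemma forward {m : ℕ} (τ : Finset (Finset (Fin (m + 1)))) (hτ : IsTopology τ)
    (hroots : ∀ z ∈ ((openPoly τ).map (algebraMap ℝ ℂ)).roots, z.im = 0) :
    τ = Finset.univ := by
  obtain ⟨h0, huniv, hunion, hinter⟩ := hτ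
  set Q : ℝ[X] := openPoly τ with hQ
  set Qc : ℂ[X] := Q.map (algebraMap ℝ ℂ) with hQc
  have hmonic : Q.Monic := openPoly_monic τ huniv
  have hdeg : Q.natDegree = m + 1 := openPoly_natDegree τ huniv
  have hQcmonic : Qc.Monic := hmonic.map _
  have hQcdeg : Qc.natDegree = m + 1 := by
    rw [hQc, hmonic.natDegree_map, hdeg]
  have hsplits : Qc.Splits := IsAlgClosed.splits Qc
  have hcard : Multiset.card Qc.roots = m + 1 := by
    rw [splits_iff_card_roots.1 hsplits, hQcdeg]
  -- each root is a negative real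
  have hre : ∀ z ∈ Qc.roots, z = (z.re : ℂ) ∧ z.re < 0 := by
    intro z hz
    have him := hroots z hz
    have hz0 : Qc.eval z = 0 := isRoot_of_mem_roots hz
    have hzeq : z = (z.re : ℂ) := Complex.ext rfl (by simp [him])
    refine ⟨hzeq, ?_⟩
    by_contra hge
    push_neg at hge
    have heval : Qc.eval ((z.re : ℂ)) = ((Q.eval z.re : ℝ) : ℂ) := by
      rw [hQc, ← Complex.coe_algebraMap, eval_map, eval₂_at_apply]
    rw [hzeq, heval] at hz0
    have : Q.eval z.re = 0 := by exact_mod_cast hz0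
    have hge1 : (1 : ℝ) ≤ Q.eval z.re := openPoly_eval_ge τ h0 hge
    linarith
  -- the multiset of (positive real) negated roots
  set T : Multiset ℝ := Qc.roots.map (fun z => -z.re) with hT
  have hTcard : Multiset.card T = m + 1 := by rw [hT, Multiset.card_map, hcard]
  have hTpos : ∀ x ∈ T, 0 < x := by
    intro x hx
    obtain ⟨z, hz, rfl⟩ := Multiset.mem_map.1 hx
    linarith [(hre z hz).2]
  have hmapmap : T.map (Complex.ofRealHom) = Qc.roots.map (fun z => -z) := by
    rw [hT, Multiset.map_map]
    refine Multiset.map_congr rfl fun z hz => ?_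
    have := (hre z hz).1
    simp only [Function.comp_apply, Complex.ofRealHom_eq_coe]
    push_cast
    rw [← this]
  -- coeff 0 of Qc is 1
  have hc0 : Qc.coeff 0 = 1 := by
    rw [hQc, coeff_map, openPoly_coeff τ 0 (by omega), openCount_zero τ h0]
    simp
  have key : ((-1 : ℂ)) ^ (m + 1) * ((-1 : ℂ)) ^ (m + 1) = 1 := by
    rw [← pow_add]
    exact Even.neg_one_pow ⟨m + 1, by ring⟩
  have hprodroots : Qc.roots.prod = (-1) ^ (m + 1) := by
    have hthis := hsplits.coeff_zero_eq_prod_roots_of_monic hQcmonic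
    rw [hc0, hQcdeg] at hthis
    calc Qc.roots.prod = ((-1 : ℂ) ^ (m + 1) * (-1 : ℂ) ^ (m + 1)) * Qc.roots.prod := by
          rw [key, one_mul]
      _ = (-1 : ℂ) ^ (m + 1) * ((-1 : ℂ) ^ (m + 1) * Qc.roots.prod) := by ring
      _ = (-1 : ℂ) ^ (m + 1) * 1 := by rw [← hthis]
      _ = (-1 : ℂ) ^ (m + 1) := mul_one _
  have hTprod : T.prod = 1 := by
    have h1 : (T.map (Complex.ofRealHom)).prod = Complex.ofRealHom T.prod :=
      (map_multiset_prod _ _).symm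
    have h2 : (Qc.roots.map (fun z : ℂ => -z)).prod
        = (-1) ^ Multiset.card Qc.roots * Qc.roots.prod := Multiset.prod_map_neg Qc.roots
    have h3 : Complex.ofRealHom T.prod = 1 := by
      rw [← h1, hmapmap, h2, hcard, hprodroots, key]
    rw [Complex.ofRealHom_eq_coe] at h3
    exact_mod_cast h3
  -- sum of T equals u_m
  have hnext : Qc.nextCoeff = (openCount τ m : ℂ) := by
    rw [nextCoeff_of_natDegree_pos (by omega), hQcdeg]
    simp only [Nat.add_sub_cancel]
    rw [hQc, coeff_map, openPoly_coeff τ m (by omega)]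
    simp
  have hTsum : T.sum = (openCount τ m : ℝ) := by
    have h1 : (T.map (Complex.ofRealHom)).sum = Complex.ofRealHom T.sum :=
      (map_multiset_sum _ _).symm
    have h2 : (Qc.roots.map (fun z : ℂ => -z)).sum = -Qc.roots.sum :=
      Multiset.sum_map_neg' Qc.roots
    have h4 := hsplits.nextCoeff_eq_neg_sum_roots_of_monic hQcmonic
    have h3 : Complex.ofRealHom T.sum = (openCount τ m : ℂ) := by
      rw [← h1, hmapmap, h2, ← h4, hnext]
    rw [Complex.ofRealHom_eq_coe] at h3
    exact_mod_cast h3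
  -- AM-GM gives m + 1 ≤ u_m
  have hge : (m + 1 : ℝ) ≤ (openCount τ m : ℝ) := by
    have := log_aux T hTpos
    rw [hTprod, Real.log_one, hTcard, hTsum] at this
    push_cast at this ⊢
    linarith
  have hge' : m + 1 ≤ openCount τ m := by exact_mod_cast hge
  have hle : openCount τ m ≤ m + 1 := by
    have := openCount_le τ m
    rwa [Nat.choose_succ_self_right] at this
  have heq : openCount τ m = (m + 1).choose m := by
    rw [Nat.choose_succ_self_right]; omega
  exact topology_eq_univ τ ⟨h0, huniv, hunion, hinter⟩
    (fun s hs => mem_of_openCount_eq τ m heq s hs)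

theorem openPoly_real_roots_iff_discrete {n : ℕ} (hn : 1 ≤ n)
    (τ : Finset (Finset (Fin n))) (hτ : IsTopology τ) :
    ((∀ z ∈ ((openPoly τ).map (algebraMap ℝ ℂ)).roots, z.im = 0) ↔
      τ = Finset.univ) ∧
    (τ = Finset.univ → openPoly τ = (1 + Polynomial.X) ^ n) := by
  obtain ⟨m, rfl⟩ : ∃ m, n = m + 1 := ⟨n - 1, (Nat.succ_pred_eq_of_pos hn).symm⟩
  refine ⟨⟨fun h => forward τ hτ h, ?_⟩, fun h => by rw [h]; exact openPoly_univ⟩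
  rintro rfl z hz
  rw [openPoly_univ] at hz
  exact roots_one_add_X_pow_real hn z hz
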